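/- For every odd positive integer k and every l ≥ 1, one has N_{k+1, l} = N_{k, l}, where N_{k,l} is the signed number of ways to choose one entry in each row of a k × l matrix. -/

import Mathlib

/-- The permutation (as a ranking function) associated to a choice `c` of one
column in each of the `k` rows of a `k × l` matrix: `σ_c i` is the number of
indices `m` with `c m < c i`, or `c m = c i` and `m ≤ i`. -/
def sigmaC {k l : ℕ} (c : Fin k → Fin l) (i : Fin k) : ℕ :=
  (Finset.univ.filter (fun m => c m < c i ∨ (c m = c i ∧ m ≤ i))).card

/-- The sign of `σ_c`, computed as the parity of its number of inversions. -/
def sgnC {k l : ℕ} (c : Fin k → Fin l) : ℤ :=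
  (-1) ^ ((Finset.univ.filter
    (fun p : Fin k × Fin k => p.1 < p.2 ∧ sigmaC c p.2 < sigmaC c p.1)).card)

/-- `N k l`: the signed count of ways to choose one entry in each row of a
`k × l` matrix. -/
def N (k l : ℕ) : ℤ := ∑ c : Fin k → Fin l, sgnC c

def E {k l : ℕ} (c : Fin k → Fin l) : ℤ :=
  ∏ p : Fin k × Fin k, if p.1 < p.2 ∧ c p.2 < c p.1 then (-1 : ℤ) else 1

def W {k l : ℕ} (t : Fin k → Fin l) (x : Fin l) : ℤ :=
  ∏ j : Fin k, if t j < x then (-1 : ℤ) else 1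

lemma W_cons {k l : ℕ} (b : Fin l) (t : Fin k → Fin l) (a : Fin l) :
    W (Fin.cons b t) a = (if b < a then (-1 : ℤ) else 1) * W t a := by
  unfold W
  rw [Fin.prod_univ_succ]
  simp

lemma W_mul_self {k l : ℕ} (t : Fin k → Fin l) (x : Fin l) : W t x * W t x = 1 := by
  unfold W
  rw [← Finset.prod_mul_distrib]
  apply Finset.prod_eq_one
  intro j _
  split <;> norm_num

lemma E_cons {k l : ℕ} (a : Fin l) (g : Fin k → Fin l) :
    E (Fin.cons a g) = W g a * E g := by
  unfold E W
  rw [Fintype.prod_prod_type, Fin.prod_univ_succ]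
  congr 1
  · rw [Fin.prod_univ_succ]
    simp
  · rw [Fintype.prod_prod_type]
    apply Finset.prod_congr rfl
    intro i _
    rw [Fin.prod_univ_succ]
    simp [Fin.succ_lt_succ_iff]

lemma key {l : ℕ} (w : Fin l → ℤ) (hw : ∀ a, w a * w a = 1) :
    ∑ p : Fin l × Fin l, (if p.2 < p.1 then (-1 : ℤ) else 1) * (w p.1 * w p.2) = l := by
  rw [← Finset.sum_filter_add_sum_filter_not Finset.univ
    (fun p : Fin l × Fin l => p.1 = p.2)]
  have h1 : ∑ p ∈ Finset.univ.filter (fun p : Fin l × Fin l => p.1 = p.2),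
      (if p.2 < p.1 then (-1 : ℤ) else 1) * (w p.1 * w p.2) = l := by
    rw [Finset.sum_congr rfl (g := fun _ => (1 : ℤ))]
    · rw [Finset.sum_const, nsmul_eq_mul, mul_one]
      congr 1
      have hd : (Finset.univ.filter (fun p : Fin l × Fin l => p.1 = p.2))
          = Finset.univ.diag := by
        ext p; simp [Finset.mem_diag]
      rw [hd, Finset.diag_card, Finset.card_univ, Fintype.card_fin]
    · intro p hp
      simp only [Finset.mem_filter] at hp
      rw [hp.2, if_neg (lt_irrefl _), one_mul, hw]
  have h2 : ∑ p ∈ Finset.univ.filter (fun p : Fin l × Fin l => ¬ p.1 = p.2),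
      (if p.2 < p.1 then (-1 : ℤ) else 1) * (w p.1 * w p.2) = 0 := by
    apply Finset.sum_involution (fun p _ => Prod.swap p)
    · intro p hp
      simp only [Finset.mem_filter, Finset.mem_univ, true_and] at hp
      simp only [Prod.fst_swap, Prod.snd_swap]
      rcases lt_or_gt_of_ne hp with h | h
      · rw [if_neg (asymm h), if_pos h]; ring
      · rw [if_pos h, if_neg (asymm h)]; ring
    · intro p hp _
      simp only [Finset.mem_filter, Finset.mem_univ, true_and] at hp
      intro hc
      exact hp (congrArg Prod.snd hc)
    · intro p hp
      simp only [Finset.mem_filter, Finset.mem_univ, true_and] at hp ⊢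
      exact fun h => hp h.symm
    · intro p hp
      rfl
  rw [h1, h2, add_zero]

lemma sigmaC_lt_of_lt {k l : ℕ} (c : Fin k → Fin l) {i j : Fin k}
    (h : c i < c j ∨ (c i = c j ∧ i < j)) : sigmaC c i < sigmaC c j := by
  apply Finset.card_lt_card
  constructor
  · intro m hm
    simp only [Finset.mem_filter, Finset.mem_univ, true_and] at hm ⊢
    rcases h with h | ⟨h, hij⟩
    · left
      rcases hm with hm | ⟨hm, _⟩
      · exact lt_trans hm h
      · exact hm ▸ h
    · rcases hm with hm | ⟨hm, hmi⟩
      · left; exact h ▸ hm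
      · right; exact ⟨h ▸ hm, le_trans hmi hij.le⟩
  · intro hsub
    have hj := hsub (by simp : j ∈ Finset.univ.filter
      (fun m => c m < c j ∨ (c m = c j ∧ m ≤ j)))
    simp only [Finset.mem_filter, Finset.mem_univ, true_and] at hj
    rcases h with h | ⟨h, hij⟩
    · rcases hj with hj | ⟨hj, _⟩
      · exact absurd (lt_trans h hj) (lt_irrefl _)
      · rw [hj] at h; exact absurd h (lt_irrefl _)
    · rcases hj with hj | ⟨_, hji⟩
      · rw [h] at hj; exact absurd hj (lt_irrefl _)
      · exact absurd hij (not_lt.mpr hji)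

lemma sigmaC_lt_iff {k l : ℕ} (c : Fin k → Fin l) {i j : Fin k} (h : i < j) :
    sigmaC c j < sigmaC c i ↔ c j < c i := by
  constructor
  · intro hs
    by_contra hc
    push_neg at hc
    rcases lt_or_eq_of_le hc with hc | hc
    · exact absurd (sigmaC_lt_of_lt c (Or.inl hc)) (not_lt.mpr hs.le)
    · exact absurd (sigmaC_lt_of_lt c (Or.inr ⟨hc, h⟩)) (not_lt.mpr hs.le)
  · intro hc
    exact sigmaC_lt_of_lt c (Or.inl hc)

lemma sgnC_eq_E {k l : ℕ} (c : Fin k → Fin l) : sgnC c = E c := by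
  unfold sgnC E
  rw [Finset.prod_ite, Finset.prod_const, Finset.prod_const_one, mul_one]
  congr 1
  apply congrArg Finset.card
  apply Finset.filter_congr
  intro p _
  constructor
  · rintro ⟨h1, h2⟩; exact ⟨h1, (sigmaC_lt_iff c h1).mp h2⟩
  · rintro ⟨h1, h2⟩; exact ⟨h1, (sigmaC_lt_iff c h1).mpr h2⟩


lemma sum_cons {l : ℕ} (m : ℕ) (F : (Fin (m + 1) → Fin l) → ℤ) :
    ∑ c : Fin (m + 1) → Fin l, F c
      = ∑ a : Fin l, ∑ g : Fin m → Fin l, F (Fin.cons a g) := by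
  calc ∑ c : Fin (m + 1) → Fin l, F c
      = ∑ p : Fin l × (Fin m → Fin l), F (Fin.cons p.1 p.2) :=
        (Fintype.sum_equiv (Fin.consEquiv fun _ => Fin l) _ _ fun p => rfl).symm
    _ = ∑ a : Fin l, ∑ g : Fin m → Fin l, F (Fin.cons a g) :=
        Fintype.sum_prod_type
          (f := fun p : Fin l × (Fin m → Fin l) => F (Fin.cons p.1 p.2))

lemma N_rec (k l : ℕ) : N (k + 2) l = l * N k l := by
  have hsum : N (k + 2) l = ∑ a : Fin l, ∑ b : Fin l, ∑ t : Fin k → Fin l,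
      E (Fin.cons a (Fin.cons b t)) := by
    unfold N
    simp_rw [sgnC_eq_E]
    rw [sum_cons (k + 1) E]
    apply Finset.sum_congr rfl
    intro a _
    rw [sum_cons k (fun g => E (Fin.cons a g))]
  rw [hsum]
  have hswap : ∀ a : Fin l, ∑ b : Fin l, ∑ t : Fin k → Fin l,
      E (Fin.cons a (Fin.cons b t))
      = ∑ t : Fin k → Fin l, ∑ b : Fin l, E (Fin.cons a (Fin.cons b t)) :=
    fun a => Finset.sum_comm
  simp_rw [hswap]
  rw [Finset.sum_comm]
  have hE : ∀ (t : Fin k → Fin l) (a b : Fin l), E (Fin.cons a (Fin.cons b t))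
      = (if b < a then (-1 : ℤ) else 1) * (W t a * W t b) * E t := by
    intro t a b
    rw [E_cons, E_cons, W_cons]
    ring
  calc ∑ t : Fin k → Fin l, ∑ a : Fin l, ∑ b : Fin l, E (Fin.cons a (Fin.cons b t))
      = ∑ t : Fin k → Fin l, (l : ℤ) * E t := by
        apply Finset.sum_congr rfl
        intro t _
        simp_rw [hE t]
        have hkey : ∑ a : Fin l, ∑ b : Fin l,
            (if b < a then (-1 : ℤ) else 1) * (W t a * W t b) = l :=
          (Fintype.sum_prod_type (f := fun p : Fin l × Fin l =>
            (if p.2 < p.1 then (-1 : ℤ) else 1) * (W t p.1 * W t p.2))).symm.trans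
            (key (W t) (W_mul_self t))
        simp_rw [← Finset.sum_mul]
        rw [hkey]
    _ = (l : ℤ) * N k l := by
        rw [← Finset.mul_sum, N]
        simp_rw [sgnC_eq_E]

lemma sgnC_of_subsingleton {k l : ℕ} (hk : k ≤ 1) (c : Fin k → Fin l) :
    sgnC c = 1 := by
  unfold sgnC
  rw [Finset.filter_false_of_mem, Finset.card_empty, pow_zero]
  intro p _
  rintro ⟨h1, -⟩
  have hp1 := p.1.isLt
  have hp2 := p.2.isLt
  have : (p.1 : ℕ) < (p.2 : ℕ) := h1
  omega

lemma N_zero (l : ℕ) : N 0 l = 1 := by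
  have h : ∀ c : Fin 0 → Fin l, sgnC c = 1 := sgnC_of_subsingleton (by norm_num)
  rw [N]
  simp [h]

lemma N_one (l : ℕ) : N 1 l = l := by
  have h : ∀ c : Fin 1 → Fin l, sgnC c = 1 := sgnC_of_subsingleton (le_refl 1)
  rw [N]
  simp [h]

theorem N_succ_eq_of_odd (k l : ℕ) (hk : Odd k) (hkpos : 0 < k) (hl : 1 ≤ l) :
    N (k + 1) l = N k l := by
  clear hkpos
  obtain ⟨m, rfl⟩ := hk
  induction m with
  | zero =>
    have h : N (0 + 2) l = N 1 l := by
      rw [N_rec, N_zero, mul_one, N_one]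
    simpa using h
  | succ n ih =>
    have h1 : 2 * (n + 1) + 1 + 1 = (2 * n + 1 + 1) + 2 := by ring
    have h2 : 2 * (n + 1) + 1 = (2 * n + 1) + 2 := by ring
    rw [h1, h2, N_rec (2 * n + 1 + 1) l, N_rec (2 * n + 1) l, ih]
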